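/- Let A be a finite set of positive integers, let ∘ ∉ A, let S = A ∪ {∘}, let γ ∈ ℕ be arbitrary, and define w(X) = γ if ∘ ∈ X and w(X) = Σ_{a∈X} a otherwise. Then there exists B ⊆ A with Σ_{b∈B} b = k if and only if there exists a partition {S_1,...,S_n} of S with Σ_{i=1}^n w(S_i) = k + γ. -/
import Mathlib


/-- `P` is a partition of the finite set `S`: blocks are nonempty, pairwise
disjoint, and their union is `S`. -/
def IsPartitionOf (P : Finset (Finset ℕ)) (S : Finset ℕ) : Prop :=
  (∀ B ∈ P, B.Nonempty) ∧
  (∀ B ∈ P, ∀ C ∈ P, B ≠ C → Disjoint B C) ∧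
  P.biUnion id = S

/-- Correctness of the Subset Sum → Subset Cost reduction: with
`S = A ∪ {∘}` and `w(X) = γ` if `∘ ∈ X` and `w(X) = Σ_{a ∈ X} a` otherwise,
there is `B ⊆ A` with `Σ_{b∈B} b = k` iff there is a partition of `S`
of total cost `k + γ`. -/
theorem subsetSum_iff_subsetCost (A : Finset ℕ) (hA : ∀ a ∈ A, 0 < a)
    (o : ℕ) (ho : o ∉ A) (γ k : ℕ)
    (w : Finset ℕ → ℕ)
    (hw : ∀ X, w X = if o ∈ X then γ else ∑ a ∈ X, a) :
    (∃ B ⊆ A, ∑ b ∈ B, b = k) ↔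
      ∃ P : Finset (Finset ℕ), IsPartitionOf P (insert o A) ∧
        ∑ B ∈ P, w B = k + γ := by
  constructor
  · rintro ⟨B, hBA, hBk⟩
    rcases B.eq_empty_or_nonempty with rfl | hBne
    · refine ⟨{insert o A}, ⟨?_, ?_, ?_⟩, ?_⟩
      · intro C hC
        simp only [Finset.mem_singleton] at hC
        subst hC; exact ⟨o, Finset.mem_insert_self o A⟩
      · intro C hC D hD hne
        simp only [Finset.mem_singleton] at hC hD
        exact absurd (hC.trans hD.symm) hne
      · simp
      · simp only [Finset.sum_singleton, hw, Finset.mem_insert_self, if_true]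
        simp at hBk
        omega
    · have hoB : o ∉ B := fun h => ho (hBA h)
      have hne : insert o (A \ B) ≠ B := by
        intro h
        exact hoB (h ▸ Finset.mem_insert_self o (A \ B))
      refine ⟨{insert o (A \ B), B}, ⟨?_, ?_, ?_⟩, ?_⟩
      · intro C hC
        simp only [Finset.mem_insert, Finset.mem_singleton] at hC
        rcases hC with rfl | rfl
        · exact ⟨o, Finset.mem_insert_self _ _⟩
        · exact hBne
      · intro C hC D hD hcd
        simp only [Finset.mem_insert, Finset.mem_singleton] at hC hD
        have key : Disjoint (insert o (A \ B)) B := by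
          rw [Finset.disjoint_insert_left]
          exact ⟨hoB, Finset.sdiff_disjoint⟩
        rcases hC with rfl | rfl <;> rcases hD with rfl | rfl <;>
          first | exact absurd rfl hcd | exact key | exact key.symm
      · ext x
        simp only [Finset.mem_biUnion, Finset.mem_insert, Finset.mem_singleton, id,
          Finset.mem_sdiff]
        constructor
        · rintro ⟨C, (rfl | rfl), hx⟩
          · simp only [Finset.mem_insert, Finset.mem_sdiff] at hx
            tauto
          · exact Or.inr (hBA hx)
        · rintro (hx | hx)
          · exact ⟨insert o (A \ B), Or.inl rfl, by rw [hx]; exact Finset.mem_insert_self _ _⟩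
          · by_cases hxB : x ∈ B
            · exact ⟨B, Or.inr rfl, hxB⟩
            · exact ⟨insert o (A \ B), Or.inl rfl,
                Finset.mem_insert_of_mem (Finset.mem_sdiff.2 ⟨hx, hxB⟩)⟩
      · rw [Finset.sum_pair hne, hw, hw]
        simp only [Finset.mem_insert_self, if_true, hoB, if_false, hBk]
        omega
  · rintro ⟨P, ⟨hne, hdisj, hU⟩, hsum⟩
    have hoU : o ∈ P.biUnion id := hU ▸ Finset.mem_insert_self o A
    obtain ⟨C, hCP, hoC⟩ := Finset.mem_biUnion.1 hoU
    refine ⟨A \ C, Finset.sdiff_subset, ?_⟩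
    have hoC' : o ∈ C := hoC
    have hwC : w C = γ := by rw [hw, if_pos hoC']
    have hrest : ∀ D ∈ P.erase C, w D = ∑ a ∈ D, a := by
      intro D hD
      have hDP := Finset.mem_of_mem_erase hD
      have hDC := Finset.ne_of_mem_erase hD
      have : o ∉ D := fun h =>
        Finset.disjoint_left.1 (hdisj D hDP C hCP hDC) h hoC'
      rw [hw, if_neg this]
    have hsplit : ∑ B ∈ P, w B = w C + ∑ D ∈ P.erase C, w D :=
      (Finset.add_sum_erase P w hCP).symm
    have hbU : (P.erase C).biUnion id = A \ C := by
      ext x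
      simp only [Finset.mem_biUnion, id, Finset.mem_sdiff]
      constructor
      · rintro ⟨D, hD, hx⟩
        have hDP := Finset.mem_of_mem_erase hD
        have hDC := Finset.ne_of_mem_erase hD
        have hxC : x ∉ C := fun hxC =>
          Finset.disjoint_left.1 (hdisj D hDP C hCP hDC) hx hxC
        have hxU : x ∈ insert o A := hU ▸ Finset.mem_biUnion.2 ⟨D, hDP, hx⟩
        rcases Finset.mem_insert.1 hxU with rfl | hxA
        · exact absurd hoC' hxC
        · exact ⟨hxA, hxC⟩
      · rintro ⟨hxA, hxC⟩
        have : x ∈ P.biUnion id := hU ▸ Finset.mem_insert_of_mem hxA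
        obtain ⟨D, hD, hx⟩ := Finset.mem_biUnion.1 this
        have hDC : D ≠ C := fun h => hxC (h ▸ hx)
        exact ⟨D, Finset.mem_erase.2 ⟨hDC, hD⟩, hx⟩
    have hdisj' : Set.PairwiseDisjoint (↑(P.erase C)) (id : Finset ℕ → Finset ℕ) := by
      intro D hD E hE hDE
      exact hdisj D (Finset.mem_of_mem_erase hD) E (Finset.mem_of_mem_erase hE) hDE
    have hsum2 : ∑ D ∈ P.erase C, w D = ∑ a ∈ A \ C, a := by
      rw [Finset.sum_congr rfl hrest, ← hbU, Finset.sum_biUnion hdisj']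
      simp only [id]
    omega
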